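/- For α ∈ ℝ, λ > 0 with λ + α > 0, and r > 0, the function g(x) = e^{−λx} is an eigenfunction of the operator f(x) ↦ e^{αx} · C_D_∞^r[e^{−αx} f(x)] with eigenvalue (λ + α)^r, where C_D_∞^r is the right Caputo fractional derivative on (x, ∞). -/

import Mathlib

open MeasureTheory

private lemma shift_Ioi (g : ℝ → ℝ) (x : ℝ) :
    ∫ y in Set.Ioi x, g y = ∫ t in Set.Ioi (0:ℝ), g (t + x) := by
  have h := (measurePreserving_add_right (volume : Measure ℝ) x).setIntegral_preimage_emb
    (MeasurableEquiv.addRight x).measurableEmbedding g (Set.Ioi x)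
  rw [← h]
  congr 1
  ext t
  simp

/-- Right Caputo fractional derivative of order `r` with upper limit `∞`. -/
noncomputable def caputoInf (r : ℝ) (f : ℝ → ℝ) : ℝ → ℝ :=
  fun x => ((-1 : ℝ) ^ (⌊r⌋₊ + 1) / Real.Gamma ((⌊r⌋₊ + 1 : ℕ) - r)) *
    ∫ y in Set.Ioi x,
      (y - x) ^ (((⌊r⌋₊ + 1 : ℕ) : ℝ) - r - 1) * iteratedDeriv (⌊r⌋₊ + 1) f y

/-- For `λ > 0` with `λ + α > 0` and `r > 0`, the function `e^{−λx}` is an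
eigenfunction of `f ↦ e^{αx} C_D_∞^r[e^{−αx} f(x)]` with eigenvalue `(λ + α)^r`. -/
theorem stmt5 (α lam r : ℝ) (hlam : 0 < lam) (hsum : 0 < lam + α) (hr : 0 < r) (x : ℝ) :
    Real.exp (α * x) *
      caputoInf r (fun y => Real.exp (-α * y) * Real.exp (-lam * y)) x
      = (lam + α) ^ r * Real.exp (-lam * x) := by
  set μ := lam + α with hμ
  set n := ⌊r⌋₊ + 1 with hn
  have hrn : r < (n : ℝ) := by
    have := Nat.lt_succ_floor r
    push_cast at this ⊢
    push_cast [hn]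
    linarith [this]
  have hs : (0:ℝ) < (n : ℝ) - r := by linarith
  have hfun : (fun y => Real.exp (-α * y) * Real.exp (-lam * y))
      = fun y => Real.exp (-μ * y) := by
    funext y
    rw [← Real.exp_add]
    ring_nf
    congr 1; rw [hμ]; ring
  rw [caputoInf, hfun, iteratedDeriv_exp_const_mul]
  have hint : (∫ y in Set.Ioi x, (y - x) ^ (((n : ℕ) : ℝ) - r - 1) *
      ((-μ) ^ n * Real.exp (-μ * y)))
      = (-μ) ^ n * (Real.exp (-μ * x) * ((1 / μ) ^ ((n:ℝ) - r) * Real.Gamma ((n:ℝ) - r))) := by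
    rw [shift_Ioi]
    have : ∀ t ∈ Set.Ioi (0:ℝ), (t + x - x) ^ (((n : ℕ) : ℝ) - r - 1) *
        ((-μ) ^ n * Real.exp (-μ * (t + x)))
        = ((-μ) ^ n * Real.exp (-μ * x)) * (t ^ (((n:ℝ) - r) - 1) * Real.exp (-(μ * t))) := by
      intro t ht
      rw [show -μ * (t + x) = -(μ * t) + -μ * x by ring, Real.exp_add]
      push_cast
      ring
    rw [setIntegral_congr_fun measurableSet_Ioi this, integral_const_mul,
      Real.integral_rpow_mul_exp_neg_mul_Ioi hs hsum]
    ring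
  rw [hint]
  have hg : Real.Gamma ((n:ℝ) - r) ≠ 0 := Real.Gamma_ne_zero (by
    intro m
    have := Real.Gamma_pos_of_pos hs
    nlinarith [Real.Gamma_pos_of_pos hs])
  have hpow : ((-1:ℝ)) ^ n * (-μ) ^ n = μ ^ n := by
    rw [← mul_pow]; ring_nf
  have hμr : μ ^ n * (1 / μ) ^ ((n:ℝ) - r) = μ ^ r := by
    rw [one_div, ← Real.rpow_natCast μ n, ← Real.rpow_neg_one,
      ← Real.rpow_mul hsum.le, ← Real.rpow_add hsum]
    congr 1
    ring
  simp only [← hn]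
  have e1 : Real.exp (α*x) * Real.exp (-μ*x) = Real.exp (-lam*x) := by
    rw [← Real.exp_add, hμ]; ring_nf
  calc Real.exp (α * x) * ((-1:ℝ) ^ n / Real.Gamma ((n:ℝ) - r) *
        ((-μ) ^ n * (Real.exp (-μ * x) * ((1 / μ) ^ ((n:ℝ) - r) * Real.Gamma ((n:ℝ) - r)))))
      = ((-1:ℝ) ^ n * (-μ) ^ n * (1 / μ) ^ ((n:ℝ) - r)) *
          (Real.exp (α * x) * Real.exp (-μ * x)) *
          (Real.Gamma ((n:ℝ) - r) / Real.Gamma ((n:ℝ) - r)) := by ring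
    _ = μ ^ r * Real.exp (-lam * x) := by
        rw [hpow, hμr, div_self hg, e1, mul_one]
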